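/- Let P{X_{n,m}=k} = 2·Σ_{ℓ=1}^{m}(-1)^{ℓ-1}·C(k+ℓ²-1, k)·C(m,ℓ)/(C(n+ℓ², n)·C(m+ℓ, m)) for 0 ≤ k ≤ n. Then the s-th factorial moment satisfies Σ_{k=0}^{n} (k)_s·P{X_{n,m}=k} = (n)_s·∏_{ℓ=1}^{m} ℓ²/(ℓ²+s), for every positive integer s. -/

import Mathlib

open Finset

lemma alt0 (N : ℕ) (h : 1 ≤ N) :
    ∑ j ∈ range (N + 1), (-1 : ℝ) ^ j * (N.choose j : ℝ) = 0 := by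
  have h1 := @Int.alternating_sum_range_choose N
  rw [if_neg (by omega)] at h1
  have h2 := congrArg (fun z : ℤ => (z : ℝ)) h1
  push_cast at h2
  convert h2 using 2

lemma alt1 (N : ℕ) (h : 2 ≤ N) :
    ∑ j ∈ range (N + 1), (-1 : ℝ) ^ j * (j : ℝ) * (N.choose j : ℝ) = 0 := by
  obtain ⟨M, rfl⟩ : ∃ M, N = M + 1 := ⟨N - 1, by omega⟩
  rw [Finset.sum_range_succ']
  calc (∑ j ∈ range (M + 1), (-1 : ℝ) ^ (j + 1) * (↑(j + 1)) * ((M + 1).choose (j + 1) : ℝ))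
        + (-1 : ℝ) ^ 0 * ((0 : ℕ) : ℝ) * ((M + 1).choose 0 : ℝ)
      = -(((M : ℝ) + 1) * ∑ j ∈ range (M + 1), (-1 : ℝ) ^ j * (M.choose j : ℝ)) := by
        rw [Finset.mul_sum, ← Finset.sum_neg_distrib]
        simp only [Nat.cast_zero, mul_zero, zero_mul, add_zero]
        refine Finset.sum_congr rfl fun j _ => ?_
        have h2 : (M + 1) * M.choose j = (M + 1).choose (j + 1) * (j + 1) := Nat.add_one_mul_choose_eq M j
        have h3 : ((M : ℝ) + 1) * (M.choose j : ℝ) = ((M + 1).choose (j + 1) : ℝ) * ((j : ℝ) + 1) := by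
          exact_mod_cast h2
        push_cast
        rw [pow_succ]
        linear_combination (-1 : ℝ) ^ j * h3
    _ = 0 := by rw [alt0 M (by omega)]; simp

lemma alt2 (N : ℕ) (h : 3 ≤ N) :
    ∑ j ∈ range (N + 1), (-1 : ℝ) ^ j * (j : ℝ) ^ 2 * (N.choose j : ℝ) = 0 := by
  obtain ⟨M, rfl⟩ : ∃ M, N = M + 1 := ⟨N - 1, by omega⟩
  rw [Finset.sum_range_succ']
  calc (∑ j ∈ range (M + 1), (-1 : ℝ) ^ (j + 1) * (↑(j + 1)) ^ 2 * ((M + 1).choose (j + 1) : ℝ))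
        + (-1 : ℝ) ^ 0 * ((0 : ℕ) : ℝ) ^ 2 * ((M + 1).choose 0 : ℝ)
      = ∑ j ∈ range (M + 1), (-((M : ℝ) + 1)) *
          ((-1 : ℝ) ^ j * (j : ℝ) * (M.choose j : ℝ) + (-1 : ℝ) ^ j * (M.choose j : ℝ)) := by
        norm_num
        refine Finset.sum_congr rfl fun j _ => ?_
        have h2 : (M + 1) * M.choose j = (M + 1).choose (j + 1) * (j + 1) := Nat.add_one_mul_choose_eq M j
        have h3 : ((M : ℝ) + 1) * (M.choose j : ℝ) = ((M + 1).choose (j + 1) : ℝ) * ((j : ℝ) + 1) := by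
          exact_mod_cast h2
        push_cast
        rw [pow_succ]
        linear_combination ((-1 : ℝ) ^ j * ((j : ℝ) + 1)) * h3
    _ = 0 := by
        rw [← Finset.mul_sum, Finset.sum_add_distrib, alt0 M (by omega), alt1 M (by omega)]; simp

lemma sum_range_split {R : Type*} [AddCommMonoid R] (a b : ℕ) (f : ℕ → R) :
    ∑ j ∈ range (a + b), f j = (∑ j ∈ range a, f j) + ∑ j ∈ range b, f (a + j) := by
  induction b with
  | zero => simp
  | succ b ih =>
    rw [show a + (b + 1) = (a + b) + 1 from rfl, Finset.sum_range_succ, ih,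
      Finset.sum_range_succ, add_assoc]

lemma sum_Icc_one {R : Type*} [AddCommMonoid R] (M : ℕ) (f : ℕ → R) :
    ∑ l ∈ Icc 1 M, f l = ∑ j ∈ range M, f (j + 1) := by
  induction M with
  | zero => simp
  | succ M ih =>
    rw [Finset.sum_range_succ, ← ih, ← Finset.insert_Icc_right_eq_Icc_add_one (by omega),
      Finset.sum_insert (by simp)]
    exact add_comm _ _

lemma negpow_congr (a b : ℕ) (h : a % 2 = b % 2) : (-1 : ℝ) ^ a = (-1 : ℝ) ^ b := by
  rcases Nat.even_or_odd a with ha | ha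
  · have hb : Even b := by rw [Nat.even_iff] at *; omega
    rw [ha.neg_one_pow, hb.neg_one_pow]
  · have hb : Odd b := by rw [Nat.odd_iff] at *; omega
    rw [ha.neg_one_pow, hb.neg_one_pow]

lemma lemH (M : ℕ) (hM : 2 ≤ M) :
    ∑ l ∈ Icc 1 M, (-1 : ℝ) ^ (l - 1) * (l : ℝ) ^ 2 * ((2 * M).choose (M + l) : ℝ) = 0 := by
  set f : ℕ → ℝ := fun j => (-1 : ℝ) ^ j * ((j : ℝ) - M) ^ 2 * ((2 * M).choose j : ℝ) with hf
  set g : ℕ → ℝ := fun j => (-1 : ℝ) ^ j * ((j : ℝ) + 1) ^ 2 * ((2 * M).choose (M + (j + 1)) : ℝ) with hg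
  have hS : ∑ j ∈ range (2 * M + 1), f j = 0 := by
    have expand : ∀ j : ℕ, f j =
        (-1 : ℝ) ^ j * (j : ℝ) ^ 2 * ((2 * M).choose j : ℝ)
        - (2 * M) * ((-1 : ℝ) ^ j * (j : ℝ) * ((2 * M).choose j : ℝ))
        + (M : ℝ) ^ 2 * ((-1 : ℝ) ^ j * ((2 * M).choose j : ℝ)) := by
      intro j; simp only [hf]; ring
    calc ∑ j ∈ range (2 * M + 1), f j
        = (∑ j ∈ range (2 * M + 1), (-1 : ℝ) ^ j * (j : ℝ) ^ 2 * ((2 * M).choose j : ℝ))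
          - (2 * M) * ∑ j ∈ range (2 * M + 1), (-1 : ℝ) ^ j * (j : ℝ) * ((2 * M).choose j : ℝ)
          + (M : ℝ) ^ 2 * ∑ j ∈ range (2 * M + 1), (-1 : ℝ) ^ j * ((2 * M).choose j : ℝ) := by
          rw [Finset.mul_sum, Finset.mul_sum, ← Finset.sum_sub_distrib, ← Finset.sum_add_distrib]
          exact Finset.sum_congr rfl fun j _ => expand j
      _ = 0 := by
          rw [alt0 (2 * M) (by omega), alt1 (2 * M) (by omega), alt2 (2 * M) (by omega)]; ring
  have hsplit : ∑ j ∈ range (2 * M + 1), f j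
      = (∑ j ∈ range M, f j) + ∑ j ∈ range (M + 1), f (M + j) := by
    rw [show 2 * M + 1 = M + (M + 1) by omega, sum_range_split]
  have hrefl : ∑ j ∈ range M, f j = ∑ j ∈ range M, f (M - 1 - j) :=
    (Finset.sum_range_reflect f M).symm
  have hsucc : ∑ j ∈ range (M + 1), f (M + j) = f M + ∑ j ∈ range M, f (M + (j + 1)) := by
    rw [Finset.sum_range_succ']
    simp [add_comm]
  have hfM : f M = 0 := by simp [hf]
  have hpair : ∀ j ∈ range M, f (M - 1 - j) + f (M + (j + 1))
      = (-2) * (-1 : ℝ) ^ M * g j := by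
    intro j hj
    rw [Finset.mem_range] at hj
    have h1 : f (M - 1 - j) = (-1 : ℝ) ^ (M + (j + 1)) * ((j : ℝ) + 1) ^ 2 * ((2 * M).choose (M + (j + 1)) : ℝ) := by
      simp only [hf]
      have e1 : (-1 : ℝ) ^ (M - 1 - j) = (-1 : ℝ) ^ (M + (j + 1)) := negpow_congr _ _ (by omega)
      have e2 : ((M - 1 - j : ℕ) : ℝ) = (M : ℝ) - 1 - j := by
        have h3 : ((M - 1 - j : ℕ) : ℝ) = ((M : ℕ) : ℝ) - ((1 + j : ℕ) : ℝ) := by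
          rw [← Nat.cast_sub (by omega)]; congr 1; omega
        push_cast at h3; linarith
      have e3 : (2 * M).choose (M - 1 - j) = (2 * M).choose (M + (j + 1)) := by
        rw [show M - 1 - j = 2 * M - (M + (j + 1)) by omega]
        exact Nat.choose_symm (by omega)
      rw [e1, e2, e3]; ring
    have h2 : f (M + (j + 1)) = (-1 : ℝ) ^ (M + (j + 1)) * ((j : ℝ) + 1) ^ 2 * ((2 * M).choose (M + (j + 1)) : ℝ) := by
      simp only [hf]
      push_cast
      ring
    rw [h1, h2, hg, pow_add, pow_succ]
    ring
  have hkey : ∑ j ∈ range M, (f (M - 1 - j) + f (M + (j + 1))) = 0 := by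
    rw [Finset.sum_add_distrib, ← hrefl]
    have h4 := hS
    rw [hsplit, hsucc, hfM] at h4
    linarith
  have hkey2 : ∑ j ∈ range M, (f (M - 1 - j) + f (M + (j + 1)))
      = ((-2) * (-1 : ℝ) ^ M) * ∑ j ∈ range M, g j := by
    rw [Finset.mul_sum]
    exact Finset.sum_congr rfl fun j hj => by rw [hpair j hj]
  have hne : ((-2) * (-1 : ℝ) ^ M) ≠ 0 := by
    rcases Nat.even_or_odd M with h | h
    · rw [h.neg_one_pow]; norm_num
    · rw [h.neg_one_pow]; norm_num
  have hT : ∑ j ∈ range M, g j = 0 := by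
    rw [hkey2] at hkey
    exact (mul_eq_zero.mp hkey).resolve_left hne
  rw [sum_Icc_one, ← hT]
  refine Finset.sum_congr rfl fun j _ => ?_
  simp only [hg, Nat.add_sub_cancel]
  push_cast
  ring

lemma urn_inner_sum (a s : ℕ) (ha : 1 ≤ a) (hs : 1 ≤ s) (n : ℕ) :
    ∑ k ∈ range (n + 1), (∏ i ∈ range s, ((k : ℝ) - i)) * ((k + a - 1).choose k : ℝ)
      = (∏ i ∈ range s, ((n : ℝ) - i)) * ((a : ℝ) / ((a : ℝ) + s)) * ((n + a).choose n : ℝ) := by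
  induction n with
  | zero =>
    have h0 : (∏ i ∈ range s, ((0 : ℕ) - (i : ℝ))) = 0 :=
      Finset.prod_eq_zero (Finset.mem_range.mpr hs) (by norm_num)
    rw [show (0:ℕ)+1 = 1 from rfl, Finset.sum_range_one]
    push_cast at h0 ⊢
    rw [h0]
    ring
  | succ n ih =>
    rw [Finset.sum_range_succ, ih]
    have hsub : (n + 1) + a - 1 = n + a := by omega
    rw [hsub]
    set D : ℝ := ∏ i ∈ range s, (((n : ℝ) + 1) - i) with hD
    set P : ℝ := ∏ i ∈ range s, ((n : ℝ) - i) with hP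
    have hA : D * (((n : ℝ) + 1) - s) = P * ((n : ℝ) + 1) := by
      have h1 : ∏ i ∈ range (s + 1), (((n : ℝ) + 1) - i) = D * (((n : ℝ) + 1) - s) := by
        rw [Finset.prod_range_succ]
      have h2 : ∏ i ∈ range (s + 1), (((n : ℝ) + 1) - i) = P * ((n : ℝ) + 1) := by
        rw [Finset.prod_range_succ']
        push_cast
        rw [hP]
        congr 1
        · exact Finset.prod_congr rfl fun i _ => by push_cast; ring
        · norm_num
      rw [← h1, h2]
    have hB : ((n : ℝ) + 1) * ((n + a).choose (n + 1) : ℝ) = (a : ℝ) * ((n + a).choose n : ℝ) := by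
      have h1 : (n + a).choose (n + 1) * (n + 1) = (n + a).choose n * (n + a - n) :=
        Nat.choose_succ_right_eq (n + a) n
      have h2 : n + a - n = a := by omega
      rw [h2] at h1
      have := congrArg (fun z : ℕ => (z : ℝ)) h1
      push_cast at this
      linarith
    have hC : ((n + 1 + a).choose (n + 1) : ℝ) = ((n + a).choose n : ℝ) + ((n + a).choose (n + 1) : ℝ) := by
      have : (n + 1 + a) = (n + a) + 1 := by omega
      rw [this]
      exact_mod_cast congrArg (fun z : ℕ => (z : ℝ)) (Nat.choose_succ_succ (n + a) n)
    rw [hC]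
    rw [show ∏ i ∈ range s, (((n + 1 : ℕ) : ℝ) - i) = D by rw [hD]; push_cast; rfl]
    have hn1 : ((n : ℝ) + 1) ≠ 0 := by positivity
    have has : ((a : ℝ) + s) ≠ 0 := by positivity
    have hPD : P = D * (((n : ℝ) + 1) - s) / ((n : ℝ) + 1) := by
      field_simp
      linarith [hA]
    rw [hPD]
    field_simp
    linear_combination D * s * hB

noncomputable def wgt (m l : ℕ) : ℝ :=
  ((m.factorial : ℝ) * (m.factorial : ℝ)) / (((m - l).factorial : ℝ) * ((m + l).factorial : ℝ))

lemma wgt_eq_choose_ratio (m l : ℕ) (h : l ≤ m) :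
    (m.choose l : ℝ) / (((m + l).choose m : ℝ)) = wgt m l := by
  rw [wgt, Nat.cast_choose ℝ h, Nat.cast_choose ℝ (Nat.le_add_right m l)]
  rw [show m + l - m = l by omega]
  have f1 : ((m - l).factorial : ℝ) ≠ 0 := by positivity
  have f2 : ((m + l).factorial : ℝ) ≠ 0 := by positivity
  have f3 : (l.factorial : ℝ) ≠ 0 := by positivity
  have f4 : (m.factorial : ℝ) ≠ 0 := by positivity
  field_simp

lemma wgt_eq_choose (M l : ℕ) (h : l ≤ M) :
    wgt M l = ((M.factorial : ℝ) * M.factorial / ((2 * M).factorial : ℝ)) * ((2 * M).choose (M + l) : ℝ) := by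
  rw [wgt, Nat.cast_choose ℝ (by omega : M + l ≤ 2 * M), show 2 * M - (M + l) = M - l by omega]
  have f1 : ((M - l).factorial : ℝ) ≠ 0 := by positivity
  have f2 : ((M + l).factorial : ℝ) ≠ 0 := by positivity
  have f3 : (((2 * M).factorial : ℕ) : ℝ) ≠ 0 := by positivity
  field_simp

lemma lemH' (M : ℕ) (hM : 2 ≤ M) :
    ∑ l ∈ Icc 1 M, (-1 : ℝ) ^ (l - 1) * wgt M l * (l : ℝ) ^ 2 = 0 := by
  have : ∀ l ∈ Icc 1 M, (-1 : ℝ) ^ (l - 1) * wgt M l * (l : ℝ) ^ 2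
      = ((M.factorial : ℝ) * M.factorial / ((2 * M).factorial : ℝ)) *
        ((-1 : ℝ) ^ (l - 1) * (l : ℝ) ^ 2 * ((2 * M).choose (M + l) : ℝ)) := by
    intro l hl
    rw [Finset.mem_Icc] at hl
    rw [wgt_eq_choose M l hl.2]
    ring
  rw [Finset.sum_congr rfl this, ← Finset.mul_sum, lemH M hM, mul_zero]

lemma lemBw (s : ℕ) (hs : 1 ≤ s) (m : ℕ) (hm : 1 ≤ m) :
    2 * ∑ l ∈ Icc 1 m, (-1 : ℝ) ^ (l - 1) * wgt m l * ((l : ℝ) ^ 2 / ((l : ℝ) ^ 2 + s))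
      = ∏ l ∈ Icc 1 m, ((l : ℝ) ^ 2 / ((l : ℝ) ^ 2 + s)) := by
  induction m, hm using Nat.le_induction with
  | base =>
    rw [Finset.Icc_self, Finset.sum_singleton, Finset.prod_singleton]
    have h1 : ((1 : ℕ) : ℝ) ^ 2 + (s : ℝ) ≠ 0 := by positivity
    rw [wgt]
    norm_num [Nat.factorial]
    ring
  | succ m hm ih =>
    have hQ : ((m : ℝ) + 1) ^ 2 + (s : ℝ) ≠ 0 := by positivity
    have key : ∀ l ∈ Icc 1 m,
        ((-1 : ℝ) ^ (l - 1) * wgt m l * ((l : ℝ) ^ 2 / ((l : ℝ) ^ 2 + s))) *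
          (((m + 1 : ℕ) : ℝ) ^ 2 / (((m + 1 : ℕ) : ℝ) ^ 2 + s))
        = (-1 : ℝ) ^ (l - 1) * wgt (m + 1) l * ((l : ℝ) ^ 2 / ((l : ℝ) ^ 2 + s))
          - (-1 : ℝ) ^ (l - 1) * wgt (m + 1) l * (l : ℝ) ^ 2 / (((m : ℝ) + 1) ^ 2 + s) := by
      intro l hl
      rw [Finset.mem_Icc] at hl
      have hw : wgt (m + 1) l = wgt m l * (((m : ℝ) + 1) ^ 2 /
          ((((m : ℝ) + 1) - l) * (((m : ℝ) + 1) + l))) := by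
        rw [wgt, wgt]
        have e1 : (m + 1).factorial = (m + 1) * m.factorial := rfl
        have e2 : (m + 1 - l).factorial = (m + 1 - l) * (m - l).factorial := by
          rw [show m + 1 - l = (m - l) + 1 by omega]; rfl
        have e3 : (m + 1 + l).factorial = (m + 1 + l) * (m + l).factorial := by
          rw [show m + 1 + l = (m + l) + 1 by omega]; rfl
        rw [e1, e2, e3]
        push_cast
        have c1 : ((m + 1 - l : ℕ) : ℝ) = (m : ℝ) + 1 - l := by
          rw [Nat.cast_sub (by omega)]; push_cast; ring
        rw [c1]
        have f1 : ((m - l).factorial : ℝ) ≠ 0 := by positivity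
        have f2 : ((m + l).factorial : ℝ) ≠ 0 := by positivity
        have f3 : (m : ℝ) + 1 - l ≠ 0 := by
          have : (l : ℝ) ≤ m := by exact_mod_cast hl.2
          intro hcon; nlinarith
        have f4 : (m : ℝ) + 1 + l ≠ 0 := by positivity
        field_simp
      rw [hw]
      have hls : (l : ℝ) ^ 2 + s ≠ 0 := by positivity
      have f3 : (m : ℝ) + 1 - l ≠ 0 := by
        have : (l : ℝ) ≤ m := by exact_mod_cast hl.2
        intro hcon; nlinarith
      have f4 : (m : ℝ) + 1 + l ≠ 0 := by positivity
      push_cast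
      field_simp
      ring
    rw [← Finset.insert_Icc_right_eq_Icc_add_one (by omega : 1 ≤ m + 1),
      Finset.sum_insert (by simp), Finset.prod_insert (by simp), ← ih]
    have hsum : (2 * ∑ l ∈ Icc 1 m, (-1 : ℝ) ^ (l - 1) * wgt m l * ((l : ℝ) ^ 2 / ((l : ℝ) ^ 2 + s))) *
          (((m + 1 : ℕ) : ℝ) ^ 2 / (((m + 1 : ℕ) : ℝ) ^ 2 + s))
        = 2 * ((∑ l ∈ Icc 1 m, (-1 : ℝ) ^ (l - 1) * wgt (m + 1) l * ((l : ℝ) ^ 2 / ((l : ℝ) ^ 2 + s)))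
          - (∑ l ∈ Icc 1 m, (-1 : ℝ) ^ (l - 1) * wgt (m + 1) l * (l : ℝ) ^ 2) / (((m : ℝ) + 1) ^ 2 + s)) := by
      rw [mul_assoc, Finset.sum_mul, Finset.sum_congr rfl key,
        Finset.sum_sub_distrib, ← Finset.sum_div]
    have hS2 : ∑ l ∈ Icc 1 m, (-1 : ℝ) ^ (l - 1) * wgt (m + 1) l * (l : ℝ) ^ 2
        = -((-1 : ℝ) ^ (m + 1 - 1) * wgt (m + 1) (m + 1) * ((m + 1 : ℕ) : ℝ) ^ 2) := by
      have h0 := lemH' (m + 1) (by omega)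
      rw [← Finset.insert_Icc_right_eq_Icc_add_one (by omega : 1 ≤ m + 1), Finset.sum_insert (by simp)] at h0
      push_cast at h0 ⊢
      linarith
    rw [hS2] at hsum
    push_cast at hsum ⊢
    linear_combination -hsum

/-- Factorial moments for urn model I with weights `α_n = n`, `β_m = m²`. -/
theorem theta_urn_factorial_moments (n m s : ℕ) (hn : 1 ≤ n) (hm : 1 ≤ m) (hs : 1 ≤ s) :
    ∑ k ∈ Finset.range (n + 1),
        (∏ i ∈ Finset.range s, ((k : ℝ) - i)) *
          (2 * ∑ l ∈ Finset.Icc 1 m, (-1 : ℝ) ^ (l - 1) *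
            ((k + l ^ 2 - 1).choose k : ℝ) * (m.choose l : ℝ) /
            (((n + l ^ 2).choose n : ℝ) * ((m + l).choose m : ℝ))) =
      (∏ i ∈ Finset.range s, ((n : ℝ) - i)) *
        ∏ l ∈ Finset.Icc 1 m, ((l : ℝ) ^ 2 / ((l : ℝ) ^ 2 + s)) := by
  have hper : ∀ l ∈ Icc 1 m,
      2 * (((-1 : ℝ) ^ (l - 1) * (m.choose l : ℝ) /
          (((n + l ^ 2).choose n : ℝ) * ((m + l).choose m : ℝ))) *
        (∑ k ∈ range (n + 1), (∏ i ∈ range s, ((k : ℝ) - i)) * ((k + l ^ 2 - 1).choose k : ℝ)))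
      = (∏ i ∈ range s, ((n : ℝ) - i)) *
          (2 * ((-1 : ℝ) ^ (l - 1) * wgt m l * ((l : ℝ) ^ 2 / ((l : ℝ) ^ 2 + s)))) := by
    intro l hl
    rw [Finset.mem_Icc] at hl
    rw [urn_inner_sum (l ^ 2) s (by nlinarith [hl.1] : 1 ≤ l ^ 2) hs n]
    rw [← wgt_eq_choose_ratio m l hl.2]
    have hC : ((n + l ^ 2).choose n : ℝ) ≠ 0 := by
      have := Nat.choose_pos (Nat.le_add_right n (l ^ 2))
      positivity
    have hM : ((m + l).choose m : ℝ) ≠ 0 := by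
      have := Nat.choose_pos (Nat.le_add_right m l)
      positivity
    have hls : ((l : ℝ) ^ 2 + s) ≠ 0 := by positivity
    push_cast
    field_simp
  have e1 : (∑ k ∈ Finset.range (n + 1),
        (∏ i ∈ Finset.range s, ((k : ℝ) - i)) *
          (2 * ∑ l ∈ Finset.Icc 1 m, (-1 : ℝ) ^ (l - 1) *
            ((k + l ^ 2 - 1).choose k : ℝ) * (m.choose l : ℝ) /
            (((n + l ^ 2).choose n : ℝ) * ((m + l).choose m : ℝ))))
      = ∑ k ∈ range (n + 1), ∑ l ∈ Icc 1 m,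
          2 * (((-1 : ℝ) ^ (l - 1) * (m.choose l : ℝ) /
            (((n + l ^ 2).choose n : ℝ) * ((m + l).choose m : ℝ))) *
            ((∏ i ∈ range s, ((k : ℝ) - i)) * ((k + l ^ 2 - 1).choose k : ℝ))) := by
    refine Finset.sum_congr rfl fun k _ => ?_
    rw [Finset.mul_sum, Finset.mul_sum]
    refine Finset.sum_congr rfl fun l _ => ?_
    ring
  have e2 : (∑ k ∈ range (n + 1), ∑ l ∈ Icc 1 m,
          2 * (((-1 : ℝ) ^ (l - 1) * (m.choose l : ℝ) /
            (((n + l ^ 2).choose n : ℝ) * ((m + l).choose m : ℝ))) *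
            ((∏ i ∈ range s, ((k : ℝ) - i)) * ((k + l ^ 2 - 1).choose k : ℝ))))
      = ∑ l ∈ Icc 1 m, ∑ k ∈ range (n + 1),
          2 * (((-1 : ℝ) ^ (l - 1) * (m.choose l : ℝ) /
            (((n + l ^ 2).choose n : ℝ) * ((m + l).choose m : ℝ))) *
            ((∏ i ∈ range s, ((k : ℝ) - i)) * ((k + l ^ 2 - 1).choose k : ℝ))) :=
    Finset.sum_comm
  have e3 : (∑ l ∈ Icc 1 m, ∑ k ∈ range (n + 1),
          2 * (((-1 : ℝ) ^ (l - 1) * (m.choose l : ℝ) /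
            (((n + l ^ 2).choose n : ℝ) * ((m + l).choose m : ℝ))) *
            ((∏ i ∈ range s, ((k : ℝ) - i)) * ((k + l ^ 2 - 1).choose k : ℝ))))
      = ∑ l ∈ Icc 1 m,
          2 * (((-1 : ℝ) ^ (l - 1) * (m.choose l : ℝ) /
            (((n + l ^ 2).choose n : ℝ) * ((m + l).choose m : ℝ))) *
            (∑ k ∈ range (n + 1), (∏ i ∈ range s, ((k : ℝ) - i)) * ((k + l ^ 2 - 1).choose k : ℝ))) := by
    refine Finset.sum_congr rfl fun l _ => ?_
    rw [Finset.mul_sum, Finset.mul_sum]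
  have e4 : (∑ l ∈ Icc 1 m,
          2 * (((-1 : ℝ) ^ (l - 1) * (m.choose l : ℝ) /
            (((n + l ^ 2).choose n : ℝ) * ((m + l).choose m : ℝ))) *
            (∑ k ∈ range (n + 1), (∏ i ∈ range s, ((k : ℝ) - i)) * ((k + l ^ 2 - 1).choose k : ℝ))))
      = ∑ l ∈ Icc 1 m, (∏ i ∈ range s, ((n : ℝ) - i)) *
          (2 * ((-1 : ℝ) ^ (l - 1) * wgt m l * ((l : ℝ) ^ 2 / ((l : ℝ) ^ 2 + s)))) :=
    Finset.sum_congr rfl hper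
  have e5 : (∑ l ∈ Icc 1 m, (∏ i ∈ range s, ((n : ℝ) - i)) *
          (2 * ((-1 : ℝ) ^ (l - 1) * wgt m l * ((l : ℝ) ^ 2 / ((l : ℝ) ^ 2 + s)))))
      = (∏ i ∈ range s, ((n : ℝ) - i)) *
          (2 * ∑ l ∈ Icc 1 m, (-1 : ℝ) ^ (l - 1) * wgt m l * ((l : ℝ) ^ 2 / ((l : ℝ) ^ 2 + s))) := by
    rw [← Finset.mul_sum, ← Finset.mul_sum]
  have e6 : ((∏ i ∈ range s, ((n : ℝ) - i)) *
          (2 * ∑ l ∈ Icc 1 m, (-1 : ℝ) ^ (l - 1) * wgt m l * ((l : ℝ) ^ 2 / ((l : ℝ) ^ 2 + s))))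
      = (∏ i ∈ Finset.range s, ((n : ℝ) - i)) *
        ∏ l ∈ Finset.Icc 1 m, ((l : ℝ) ^ 2 / ((l : ℝ) ^ 2 + s)) := by
    rw [lemBw s hs m hm]
  exact e1.trans (e2.trans (e3.trans (e4.trans (e5.trans e6))))
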